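/- For $\ell \ge 2$ and real $r \ge 1$, the volume $v_{\ell}(r)$ of the hyperbolic cross set $\{x \in \mathbb{R}^{\ell} : x_j \ge 1, \prod_{j=1}^{\ell} x_j \le r\}$ satisfies the lower bound $v_{\ell}(r) \ge r\left(\frac{(\ln r)^{\ell-1}}{(\ell-1)!} - \frac{(\ln r)^{\ell-2}}{(\ell-2)!}\right)$. -/

import Mathlib

open MeasureTheory Set

/-- `v ℓ r` : the `ℓ`-dimensional Lebesgue volume of the hyperbolic-cross set
`{x ∈ ℝ^ℓ : x_j ≥ 1 for all j, ∏ x_j ≤ r}`. -/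
noncomputable def hypVol (ℓ : ℕ) (r : ℝ) : ℝ :=
  (volume {x : Fin ℓ → ℝ | (∀ j, 1 ≤ x j) ∧ ∏ j, x j ≤ r}).toReal

def Sset (ℓ : ℕ) (r : ℝ) : Set (Fin ℓ → ℝ) := {x | (∀ j, 1 ≤ x j) ∧ ∏ j, x j ≤ r}

lemma hypVol_eq (ℓ : ℕ) (r : ℝ) : hypVol ℓ r = (volume (Sset ℓ r)).toReal := rfl

lemma hypVol_nonneg (ℓ : ℕ) (r : ℝ) : 0 ≤ hypVol ℓ r := ENNReal.toReal_nonneg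

lemma Sset_subset (ℓ : ℕ) (r : ℝ) : Sset ℓ r ⊆ univ.pi fun _ => Icc 1 (max 1 r) := by
  rintro x ⟨h1, h2⟩ j _
  refine ⟨h1 j, le_max_of_le_right ?_⟩
  have herase : (1:ℝ) ≤ ∏ i ∈ Finset.univ.erase j, x i := by
    have := Finset.prod_le_prod (s := Finset.univ.erase j) (f := fun _ => (1:ℝ)) (g := x)
      (fun i _ => zero_le_one) (fun i _ => h1 i)
    simpa using this
  calc x j = x j * 1 := (mul_one _).symm
    _ ≤ x j * ∏ i ∈ Finset.univ.erase j, x i :=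
        mul_le_mul_of_nonneg_left herase (le_trans zero_le_one (h1 j))
    _ = ∏ i, x i := Finset.mul_prod_erase _ _ (Finset.mem_univ j)
    _ ≤ r := h2

lemma Sset_vol_ne_top (ℓ : ℕ) (r : ℝ) : volume (Sset ℓ r) ≠ ⊤ := by
  refine ne_top_of_le_ne_top ?_ (measure_mono (Sset_subset ℓ r))
  rw [volume_pi_pi]
  simp only [Real.volume_Icc, Finset.prod_const, Finset.card_univ, Fintype.card_fin]
  exact ENNReal.pow_ne_top ENNReal.ofReal_ne_top

lemma hypVol_one (s : ℝ) (hs : 1 ≤ s) : hypVol 1 s = s - 1 := by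
  have hset : Sset 1 s = (MeasurableEquiv.funUnique (Fin 1) ℝ) ⁻¹' (Icc 1 s) := by
    ext x
    simp [Sset, MeasurableEquiv.funUnique_apply, Fin.forall_fin_one, Fin.prod_univ_one]
  show (volume (Sset 1 s)).toReal = s - 1
  erw [hset, (volume_preserving_funUnique (Fin 1) ℝ).measure_preimage
      measurableSet_Icc.nullMeasurableSet, Real.volume_Icc,
    ENNReal.toReal_ofReal (by linarith)]

def Tset (ℓ : ℕ) (r : ℝ) : Set (ℝ × (Fin ℓ → ℝ)) :=
  {p | 1 ≤ p.1 ∧ (∀ j, 1 ≤ p.2 j) ∧ p.1 * ∏ j, p.2 j ≤ r}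

lemma Tset_meas (ℓ : ℕ) (r : ℝ) : MeasurableSet (Tset ℓ r) := by
  have h1 : MeasurableSet {p : ℝ × (Fin ℓ → ℝ) | 1 ≤ p.1} :=
    measurableSet_le measurable_const measurable_fst
  have h2 : MeasurableSet {p : ℝ × (Fin ℓ → ℝ) | ∀ j, 1 ≤ p.2 j} := by
    rw [Set.setOf_forall]
    exact MeasurableSet.iInter fun j =>
      measurableSet_le measurable_const (measurable_snd.eval)
  have h3 : MeasurableSet {p : ℝ × (Fin ℓ → ℝ) | p.1 * ∏ j, p.2 j ≤ r} := by
    refine measurableSet_le (Measurable.mul measurable_fst ?_) measurable_const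
    exact Finset.measurable_prod _ fun j _ => (measurable_pi_apply j).comp measurable_snd
  exact h1.inter (h2.inter h3)

lemma Sset_preimage (ℓ : ℕ) (r : ℝ) :
    Sset (ℓ+1) r = (MeasurableEquiv.piFinSuccAbove (fun _ => ℝ) 0) ⁻¹' (Tset ℓ r) := by
  ext x
  simp only [Sset, Tset, Set.mem_preimage, Set.mem_setOf_eq,
    MeasurableEquiv.piFinSuccAbove_apply, Fin.insertNthEquiv, Equiv.coe_fn_symm_mk,
    Fin.removeNth, Fin.zero_succAbove, Fin.forall_fin_succ, Fin.prod_univ_succ]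
  tauto

lemma slice_eq (ℓ : ℕ) (r y : ℝ) (hy : 1 ≤ y) :
    Prod.mk y ⁻¹' (Tset ℓ r) = Sset ℓ (r / y) := by
  ext x
  simp only [Tset, Sset, Set.mem_preimage, Set.mem_setOf_eq]
  have hy0 : (0:ℝ) < y := by linarith
  rw [mul_comm, ← le_div_iff₀ hy0]
  tauto

lemma slice_subset (ℓ : ℕ) (r y : ℝ) :
    Prod.mk y ⁻¹' (Tset ℓ r) ⊆ Sset ℓ r := by
  rintro x ⟨hy, h1, h2⟩
  refine ⟨h1, ?_⟩
  calc ∏ j, x j = 1 * ∏ j, x j := (one_mul _).symm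
    _ ≤ y * ∏ j, x j := by
        exact mul_le_mul_of_nonneg_right hy
          (Finset.prod_nonneg fun j _ => le_trans zero_le_one (h1 j))
    _ ≤ r := h2

lemma hypVol_rec (ℓ : ℕ) (r : ℝ) :
    ∫ y in Icc 1 r, hypVol ℓ (r/y) ≤ hypVol (ℓ+1) r := by
  set F : ℝ → ENNReal := fun y => volume (Prod.mk y ⁻¹' (Tset ℓ r)) with hF
  have hFmeas : Measurable F := measurable_measure_prodMk_left (Tset_meas ℓ r)
  have hFle : ∀ y, F y ≤ volume (Sset ℓ r) := fun y => measure_mono (slice_subset ℓ r y)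
  have hFne : ∀ y, F y ≠ ⊤ := fun y => ne_top_of_le_ne_top (Sset_vol_ne_top ℓ r) (hFle y)
  have hvol : volume (Sset (ℓ+1) r) = ∫⁻ y, F y := by
    rw [Sset_preimage,
      (volume_preserving_piFinSuccAbove (fun _ : Fin (ℓ+1) => ℝ) 0).measure_preimage
        (Tset_meas ℓ r).nullMeasurableSet, Measure.volume_eq_prod,
      Measure.prod_apply (Tset_meas ℓ r)]
  have h3 : ∫ y in Icc 1 r, hypVol ℓ (r/y) = (∫⁻ y in Icc 1 r, F y).toReal := by
    rw [← integral_toReal (hFmeas.aemeasurable.restrict)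
      (ae_of_all _ fun y => lt_top_iff_ne_top.2 (hFne y))]
    refine setIntegral_congr_fun measurableSet_Icc fun y hy => ?_
    simp only [hypVol_eq, hF, slice_eq ℓ r y hy.1]
  rw [h3, hypVol_eq, hvol]
  exact ENNReal.toReal_mono (hvol ▸ Sset_vol_ne_top (ℓ+1) r)
    (setLIntegral_le_lintegral _ _)

lemma hypVol_integrableOn (ℓ : ℕ) (r : ℝ) :
    IntegrableOn (fun y => hypVol ℓ (r/y)) (Icc 1 r) volume := by
  set F : ℝ → ENNReal := fun y => volume (Prod.mk y ⁻¹' (Tset ℓ r)) with hF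
  have hFmeas : Measurable F := measurable_measure_prodMk_left (Tset_meas ℓ r)
  have hFle : ∀ y, F y ≤ volume (Sset ℓ r) := fun y => measure_mono (slice_subset ℓ r y)
  have hbase : IntegrableOn (fun y => (F y).toReal) (Icc 1 r) volume := by
    refine Measure.integrableOn_of_bounded (by simp [Real.volume_Icc]) ?_
      (M := (volume (Sset ℓ r)).toReal) ?_
    · exact (hFmeas.ennreal_toReal).aestronglyMeasurable
    · refine ae_of_all _ fun y => ?_
      rw [Real.norm_eq_abs, abs_of_nonneg ENNReal.toReal_nonneg]
      exact ENNReal.toReal_mono (Sset_vol_ne_top ℓ r) (hFle y)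
  refine hbase.congr_fun (fun y hy => ?_) measurableSet_Icc
  simp only [hypVol_eq, hF, slice_eq ℓ r y hy.1]

lemma hypVol_step (ℓ : ℕ) (f : ℝ → ℝ) (hf : Continuous f)
    (hlow : ∀ s, 1 ≤ s → s * f (Real.log s) ≤ hypVol ℓ s)
    (r : ℝ) (hr : 1 ≤ r) :
    r * ∫ u in (0:ℝ)..(Real.log r), f u ≤ hypVol (ℓ+1) r := by
  have hr0 : (0:ℝ) < r := by linarith
  set g : ℝ → ℝ := fun u => ∫ t in (0:ℝ)..u, f t with hg
  have hgderiv : ∀ u, HasDerivAt g (f u) u := fun u =>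
    intervalIntegral.integral_hasDerivAt_right (hf.intervalIntegrable _ _)
      hf.stronglyMeasurable.stronglyMeasurableAtFilter hf.continuousAt
  have hmain : ∀ y ∈ uIcc (1:ℝ) r, HasDerivAt (fun y => -r * g (Real.log r - Real.log y))
      (r * y⁻¹ * f (Real.log r - Real.log y)) y := by
    intro y hy
    rw [uIcc_of_le hr] at hy
    have hy0 : (0:ℝ) < y := lt_of_lt_of_le zero_lt_one hy.1
    have h1 : HasDerivAt (fun y : ℝ => Real.log r - Real.log y) (-y⁻¹) y := by
      simpa using (Real.hasDerivAt_log (ne_of_gt hy0)).const_sub (Real.log r)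
    have h3 := ((hgderiv _).comp y h1).const_mul (-r)
    rw [show r * y⁻¹ * f (Real.log r - Real.log y) = -r * (f (Real.log r - Real.log y) * -y⁻¹) by ring]
    exact h3
  have hne : ∀ y ∈ Icc (1:ℝ) r, y ≠ 0 :=
    fun y hy => ne_of_gt (lt_of_lt_of_le zero_lt_one hy.1)
  have hcont : ContinuousOn (fun y : ℝ => r * y⁻¹ * f (Real.log r - Real.log y)) (Icc 1 r) := by
    have hlog : ContinuousOn (fun y : ℝ => Real.log y) (Icc 1 r) :=
      Real.continuousOn_log.mono (fun y hy => by simpa using hne y hy)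
    exact ((continuousOn_const.mul (ContinuousOn.inv₀ continuousOn_id hne))).mul
      (hf.comp_continuousOn (continuousOn_const.sub hlog))
  have hInt : IntervalIntegrable (fun y => r * y⁻¹ * f (Real.log r - Real.log y)) volume 1 r := by
    apply ContinuousOn.intervalIntegrable
    rwa [uIcc_of_le hr]
  have hcalc : ∫ y in (1:ℝ)..r, r * y⁻¹ * f (Real.log r - Real.log y) = r * g (Real.log r) := by
    rw [intervalIntegral.integral_eq_sub_of_hasDerivAt hmain hInt]
    have hg0 : g 0 = 0 := intervalIntegral.integral_same
    simp [Real.log_one, sub_self, hg0]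
  have hchain : ∫ y in (1:ℝ)..r, r * y⁻¹ * f (Real.log r - Real.log y)
      = ∫ y in Icc 1 r, r * y⁻¹ * f (Real.log r - Real.log y) := by
    rw [intervalIntegral.integral_of_le hr, ← integral_Icc_eq_integral_Ioc]
  have hmono : ∫ y in Icc 1 r, r * y⁻¹ * f (Real.log r - Real.log y)
      ≤ ∫ y in Icc 1 r, hypVol ℓ (r/y) := by
    refine setIntegral_mono_on (hcont.integrableOn_Icc) (hypVol_integrableOn ℓ r)
      measurableSet_Icc ?_
    intro y hy
    have hy0 : (0:ℝ) < y := lt_of_lt_of_le zero_lt_one hy.1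
    have hs : 1 ≤ r / y := (one_le_div hy0).2 hy.2
    calc r * y⁻¹ * f (Real.log r - Real.log y) = (r/y) * f (Real.log (r/y)) := by
          rw [Real.log_div (ne_of_gt hr0) (ne_of_gt hy0)]; ring
      _ ≤ hypVol ℓ (r/y) := hlow _ hs
  calc r * ∫ u in (0:ℝ)..(Real.log r), f u
      = ∫ y in (1:ℝ)..r, r * y⁻¹ * f (Real.log r - Real.log y) := hcalc.symm
    _ = ∫ y in Icc 1 r, r * y⁻¹ * f (Real.log r - Real.log y) := hchain
    _ ≤ ∫ y in Icc 1 r, hypVol ℓ (r/y) := hmono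
    _ ≤ hypVol (ℓ+1) r := hypVol_rec ℓ r

lemma hypVol_main (k : ℕ) : ∀ r : ℝ, 1 ≤ r →
    r * ((Real.log r)^(k+1) / (Nat.factorial (k+1)) - (Real.log r)^k / (Nat.factorial k))
      ≤ hypVol (k+2) r := by
  induction k with
  | zero =>
    intro r hr
    have hf : Continuous (fun u : ℝ => 1 - Real.exp (-u)) := by continuity
    have hlow : ∀ s, 1 ≤ s → s * (1 - Real.exp (-Real.log s)) ≤ hypVol 1 s := by
      intro s hs
      have hs0 : (0:ℝ) < s := by linarith
      rw [hypVol_one s hs, Real.exp_neg, Real.exp_log hs0]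
      have hs' : s * (1 - s⁻¹) = s - 1 := by field_simp
      rw [hs']
    have h := hypVol_step 1 _ hf hlow r hr
    have hder : ∀ u ∈ uIcc (0:ℝ) (Real.log r),
        HasDerivAt (fun u => u + Real.exp (-u)) (1 - Real.exp (-u)) u := by
      intro u _
      have h1 : HasDerivAt (fun u : ℝ => Real.exp (-u)) (-Real.exp (-u)) u := by
        simpa [Function.comp_def] using (Real.hasDerivAt_exp (-u)).comp u ((hasDerivAt_id u).neg)
      have h2 := (hasDerivAt_id u).add h1
      rw [sub_eq_add_neg]
      exact h2
    rw [intervalIntegral.integral_eq_sub_of_hasDerivAt hder (hf.intervalIntegrable _ _)] at h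
    simp only [Real.exp_zero, neg_zero, zero_add] at h
    have hexp : 0 ≤ Real.exp (-Real.log r) := le_of_lt (Real.exp_pos _)
    simp only [Nat.factorial, pow_one, pow_zero, Nat.cast_one]
    nlinarith
  | succ k ih =>
    intro r hr
    set c1 : ℝ := (Nat.factorial (k+1) : ℝ) with hc1
    set c2 : ℝ := (Nat.factorial k : ℝ) with hc2
    have hf : Continuous (fun u : ℝ => u^(k+1)/c1 - u^k/c2) := by continuity
    have h := hypVol_step (k+2) _ hf ih r hr
    set L := Real.log r with hL
    have hint : ∫ u in (0:ℝ)..L, (u^(k+1)/c1 - u^k/c2)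
        = (L^(k+2)/(k+2))/c1 - (L^(k+1)/(k+1))/c2 := by
      rw [intervalIntegral.integral_sub
          ((continuous_pow (k+1)).div_const c1 |>.intervalIntegrable _ _)
          ((continuous_pow k).div_const c2 |>.intervalIntegrable _ _),
        intervalIntegral.integral_div, intervalIntegral.integral_div,
        integral_pow, integral_pow]
      push_cast
      ring
    rw [hint] at h
    refine le_trans (le_of_eq ?_) h
    have hc1pos : (0:ℝ) < c1 := by rw [hc1]; exact_mod_cast Nat.factorial_pos (k+1)
    have hc2pos : (0:ℝ) < c2 := by rw [hc2]; exact_mod_cast Nat.factorial_pos k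
    have e1 : ((Nat.factorial (k+2) : ℕ) : ℝ) = (k+2) * c1 := by
      rw [hc1]; push_cast [Nat.factorial_succ]; ring
    have e2 : c1 = (k+1) * c2 := by
      rw [hc1, hc2]; push_cast [Nat.factorial_succ]; ring
    have hk1 : ((k:ℝ)+1) ≠ 0 := by positivity
    have hk2 : ((k:ℝ)+2) ≠ 0 := by positivity
    rw [show k+1+1 = k+2 from rfl, e1, e2]
    field_simp

theorem stmt2 (ℓ : ℕ) (hℓ : 2 ≤ ℓ) (r : ℝ) (hr : 1 ≤ r) :
    r * ((Real.log r) ^ (ℓ - 1) / (Nat.factorial (ℓ - 1))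
        - (Real.log r) ^ (ℓ - 2) / (Nat.factorial (ℓ - 2))) ≤ hypVol ℓ r := by
  obtain ⟨k, rfl⟩ : ∃ k, ℓ = k + 2 := ⟨ℓ - 2, by omega⟩
  have h1 : k + 2 - 1 = k + 1 := by omega
  have h2 : k + 2 - 2 = k := by omega
  rw [h1, h2]
  exact hypVol_main k r hr
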